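/- Let G be a brick, and let f1 and f2 be two edges of G sharing a common endpoint. If S1 is a barrier of G − f1 and S2 is a barrier of G − f2, then |S1 ∩ S2| ≤ 1. -/

import Mathlib

open SimpleGraph Set

universe u
variable {V : Type u}

/-- Number of odd components of a graph. -/
noncomputable def oddComps (G : SimpleGraph V) : ℕ :=
  Nat.card {c : G.ConnectedComponent // Odd (Nat.card c.supp)}

/-- `S` is a barrier of `G`: the number of odd components of `G − S` equals `|S|`. -/
def IsBarrier (G : SimpleGraph V) (S : Set V) : Prop :=
  oddComps (G.induce Sᶜ) = S.ncard

/-- `G` has a perfect matching. -/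
def HasPM (G : SimpleGraph V) : Prop :=
  ∃ M : Subgraph G, M.IsPerfectMatching

/-- `G` is matching covered. -/
def MatchingCovered (G : SimpleGraph V) : Prop :=
  G.Connected ∧ G.edgeSet.Nonempty ∧
    ∀ e ∈ G.edgeSet, ∃ M : Subgraph G, M.IsPerfectMatching ∧ e ∈ M.edgeSet

/-- An edge `e` of a matching covered graph `G` is removable. -/
def Removable (G : SimpleGraph V) (e : Sym2 V) : Prop :=
  e ∈ G.edgeSet ∧ MatchingCovered (G.deleteEdges {e})

/-- `G` is 3-connected. -/
def ThreeConnected (G : SimpleGraph V) : Prop :=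
  4 ≤ Nat.card V ∧ ∀ S : Set V, S.ncard ≤ 2 → (G.induce Sᶜ).Connected

/-- A brick. -/
def IsBrick (G : SimpleGraph V) : Prop :=
  ThreeConnected G ∧ ∀ x y : V, x ≠ y → HasPM (G.induce ({x, y} : Set V)ᶜ)

/-- neighbours outside `S` of vertices of `S`. -/
def Nbrs (G : SimpleGraph V) (S : Set V) : Set V :=
  {v | v ∉ S ∧ ∃ u ∈ S, G.Adj u v}

/-- factor-critical graph. -/
def FactorCritical (G : SimpleGraph V) : Prop :=
  ∀ v : V, HasPM (G.induce ({v} : Set V)ᶜ)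

/-- `(U, W)` is a bipartition of `G`. -/
def IsBipartition (G : SimpleGraph V) (U W : Set V) : Prop :=
  Disjoint U W ∧ U ∪ W = Set.univ ∧
    ∀ a b : V, G.Adj a b → (a ∈ U ∧ b ∈ W) ∨ (a ∈ W ∧ b ∈ U)

lemma oddComps_congr {V W : Type*} {G : SimpleGraph V} {H : SimpleGraph W} (φ : G ≃g H) :
    oddComps G = oddComps H := by
  unfold oddComps
  apply Nat.card_congr
  refine Equiv.subtypeEquiv φ.connectedComponentEquiv fun c => ?_
  have hsupp : (φ.connectedComponentEquiv c).supp = φ.toEquiv '' c.supp := by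
    ext w
    rw [Set.mem_image_equiv]
    simp only [ConnectedComponent.mem_supp_iff, Iso.connectedComponentEquiv_apply]
    exact (ConnectedComponent.iso_inv_image_comp_eq_iff_eq_map (φ := φ)).symm
  rw [hsupp, Nat.card_coe_set_eq, Nat.card_coe_set_eq,
    Set.ncard_image_of_injective _ φ.toEquiv.injective]


lemma easyTutte {V : Type*} [Fintype V] (H : SimpleGraph V) (hPM : HasPM H) (T : Set V) :
    oddComps (H.induce Tᶜ) ≤ T.ncard := by
  classical
  obtain ⟨M, hM⟩ := hPM
  -- iso between the induced graph and the deleteVerts coe graph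
  have hverts : ((⊤ : H.Subgraph).deleteVerts T).verts = Tᶜ := by
    simp [Set.compl_eq_univ_diff]
  have φ : ((⊤ : H.Subgraph).deleteVerts T).coe ≃g H.induce Tᶜ := by
    refine ⟨Equiv.setCongr hverts, ?_⟩
    intro a b
    simp only [SimpleGraph.comap_adj, Function.Embedding.coe_subtype, Equiv.setCongr_apply,
      SimpleGraph.Subgraph.coe_adj, SimpleGraph.Subgraph.deleteVerts_adj,
      SimpleGraph.Subgraph.verts_top, SimpleGraph.Subgraph.top_adj]
    exact ⟨fun h => ⟨trivial, a.2.2, trivial, b.2.2, h⟩, fun h => h.2.2.2.2⟩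
  rw [← oddComps_congr φ]
  unfold oddComps
  rw [← Nat.card_coe_set_eq]
  have : Finite ↥T := Subtype.finite
  apply Nat.card_le_card_of_injective
    (f := fun c : {c : ((⊤ : H.Subgraph).deleteVerts T).coe.ConnectedComponent //
        Odd (Nat.card c.supp)} =>
      (⟨(SimpleGraph.ConnectedComponent.odd_matches_node_outside hM (u := T) ⟨c.1, c.2⟩).choose,
        (SimpleGraph.ConnectedComponent.odd_matches_node_outside hM (u := T) ⟨c.1, c.2⟩).choose_spec.1⟩ : T))
  intro c1 c2 hc
  obtain ⟨v1, hv1, hc1⟩ := (SimpleGraph.ConnectedComponent.odd_matches_node_outside hM (u := T) ⟨c1.1, c1.2⟩).choose_spec.2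
  obtain ⟨v2, hv2, hc2⟩ := (SimpleGraph.ConnectedComponent.odd_matches_node_outside hM (u := T) ⟨c2.1, c2.2⟩).choose_spec.2
  have hw : (SimpleGraph.ConnectedComponent.odd_matches_node_outside hM (u := T) ⟨c1.1, c1.2⟩).choose =
      (SimpleGraph.ConnectedComponent.odd_matches_node_outside hM (u := T) ⟨c2.1, c2.2⟩).choose :=
    congrArg Subtype.val hc
  rw [hw] at hv1
  obtain ⟨x, -, hxuniq⟩ := hM.1 (hM.2 (SimpleGraph.ConnectedComponent.odd_matches_node_outside hM (u := T) ⟨c2.1, c2.2⟩).choose)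
  have hv12 : (v1 : V) = (v2 : V) := by
    rw [hxuniq _ (M.adj_symm hv1), hxuniq _ (M.adj_symm hv2)]
  have hv12' : v1 = v2 := Subtype.ext hv12
  ext1
  rw [← (SimpleGraph.ConnectedComponent.mem_supp_iff _ _).mp hc1,
    ← (SimpleGraph.ConnectedComponent.mem_supp_iff _ _).mp hc2, hv12']


lemma barrier_no_pm {V : Type*} [Fintype V] (H : SimpleGraph V) (S : Set V)
    (hS : IsBarrier H S) {x y : V} (hx : x ∈ S) (hy : y ∈ S) (hxy : x ≠ y) :
    ¬ HasPM (H.induce ({x, y} : Set V)ᶜ) := by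
  intro hPM
  classical
  set T : Set ↑(({x, y} : Set V)ᶜ) := {v | (v : V) ∈ S} with hT
  have hle := easyTutte _ hPM T
  -- iso between ((H.induce {x,y}ᶜ).induce Tᶜ) and H.induce Sᶜ
  have hsub : ({x, y} : Set V) ⊆ S := by
    intro z hz; rcases hz with rfl | hz; · exact hx
    · rw [Set.mem_singleton_iff] at hz; subst hz; exact hy
  have φ : ((H.induce ({x, y} : Set V)ᶜ).induce Tᶜ) ≃g H.induce Sᶜ :=
    { toFun := fun v => ⟨v.1.1, v.2⟩
      invFun := fun v => ⟨⟨v.1, fun h => v.2 (hsub h)⟩, fun h => v.2 h⟩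
      left_inv := fun v => by ext; rfl
      right_inv := fun v => by ext; rfl
      map_rel_iff' := fun {a b} => ⟨fun h => h, fun h => h⟩ }
  rw [oddComps_congr φ, hS] at hle
  -- T.ncard = (S \ {x,y}).ncard
  have hTcard : T.ncard = (S \ {x, y}).ncard := by
    rw [← Nat.card_coe_set_eq, ← Nat.card_coe_set_eq]
    apply Nat.card_congr
    exact { toFun := fun v => ⟨v.1.1, v.2, v.1.2⟩
            invFun := fun v => ⟨⟨v.1, v.2.2⟩, v.2.1⟩
            left_inv := fun v => by ext; rfl
            right_inv := fun v => by ext; rfl }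
  have hdiff : (S \ {x, y}).ncard = S.ncard - 2 := by
    rw [Set.ncard_diff hsub, Set.ncard_pair hxy]
  have h2 : 2 ≤ S.ncard := by
    rw [← Set.ncard_pair hxy]
    exact Set.ncard_le_ncard hsub S.toFinite
  rw [hTcard, hdiff] at hle
  omega

lemma pm_transfer {V : Type*} (G : SimpleGraph V) (T : Set V) (f : Sym2 V)
    (M : SimpleGraph.Subgraph (G.induce Tᶜ)) (hM : M.IsPerfectMatching)
    (hav : ∀ v w : ↑Tᶜ, M.Adj v w → s((v : V), (w : V)) ≠ f) :
    HasPM ((G.deleteEdges {f}).induce Tᶜ) := by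
  refine ⟨⟨M.verts, M.Adj, fun {v w} h => ?_, fun {v w} h => M.edge_vert h, M.symm⟩, hM.1, hM.2⟩
  simp only [SimpleGraph.comap_adj, Function.Embedding.coe_subtype, SimpleGraph.deleteEdges_adj,
    Set.mem_singleton_iff]
  exact ⟨M.adj_sub h, hav v w h⟩

/-- barriers of `G − f₁` and `G − f₂` for adjacent edges `f₁, f₂`
of a brick intersect in at most one vertex. -/
theorem stmt6 [Fintype V] (G : SimpleGraph V) (hG : IsBrick G)
    (u a b : V) (hua : G.Adj u a) (hub : G.Adj u b)
    (hne : s(u, a) ≠ s(u, b)) (S1 S2 : Set V)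
    (h1 : IsBarrier (G.deleteEdges {s(u, a)}) S1)
    (h2 : IsBarrier (G.deleteEdges {s(u, b)}) S2) :
    (S1 ∩ S2).ncard ≤ 1 := by
  classical
  by_contra hcon
  push_neg at hcon
  obtain ⟨x, y, hx, hy, hxy⟩ := (Set.one_lt_ncard_iff (S1 ∩ S2).toFinite).mp hcon
  obtain ⟨M, hM⟩ := hG.2 x y hxy
  have hab : a ≠ b := fun h => hne (by rw [h])
  -- M avoids f1 or f2
  have key : (∀ v w : ↑(({x, y} : Set V)ᶜ), M.Adj v w → s((v : V), (w : V)) ≠ s(u, a)) ∨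
      (∀ v w : ↑(({x, y} : Set V)ᶜ), M.Adj v w → s((v : V), (w : V)) ≠ s(u, b)) := by
    by_contra h
    push_neg at h
    obtain ⟨⟨v1, w1, hvw1, he1⟩, ⟨v2, w2, hvw2, he2⟩⟩ := h
    -- normalize: get p q with M.Adj p q, p.1 = u, q.1 = a
    have H1 : ∃ p q : ↑(({x, y} : Set V)ᶜ), M.Adj p q ∧ (p : V) = u ∧ (q : V) = a := by
      rw [Sym2.eq_iff] at he1
      rcases he1 with ⟨h1, h2⟩ | ⟨h1, h2⟩
      · exact ⟨v1, w1, hvw1, h1, h2⟩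
      · exact ⟨w1, v1, M.adj_symm hvw1, h2, h1⟩
    have H2 : ∃ p q : ↑(({x, y} : Set V)ᶜ), M.Adj p q ∧ (p : V) = u ∧ (q : V) = b := by
      rw [Sym2.eq_iff] at he2
      rcases he2 with ⟨h1, h2⟩ | ⟨h1, h2⟩
      · exact ⟨v2, w2, hvw2, h1, h2⟩
      · exact ⟨w2, v2, M.adj_symm hvw2, h2, h1⟩
    obtain ⟨p1, q1, hpq1, hp1, hq1⟩ := H1
    obtain ⟨p2, q2, hpq2, hp2, hq2⟩ := H2
    have hp : p1 = p2 := Subtype.ext (hp1.trans hp2.symm)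
    obtain ⟨z, -, hz⟩ := hM.1 (hM.2 p1)
    have : q1 = q2 := by rw [hz q1 hpq1, hz q2 (hp ▸ hpq2)]
    exact hab ((hq1.symm.trans (congrArg _ this)).trans hq2)
  rcases key with hav | hav
  · exact barrier_no_pm _ S1 h1 hx.1 hy.1 hxy (pm_transfer G _ _ M hM hav)
  · exact barrier_no_pm _ S2 h2 hx.2 hy.2 hxy (pm_transfer G _ _ M hM hav)
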